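/- The total number of epochs produced by lazy updating satisfies J ≤ 1 + H·S·A·log(K/(S·A) + 1)/log(1 + 1/α). -/

import Mathlib

/-- If `f` is nondecreasing up to `n`, starts at least `1`, and multiplies by `β` at each
step satisfying `P`, then `f n` is at least `β` to the number of such steps below `n`. -/
lemma aux_pow_le_of_steps (β : ℝ) (hβ : 1 ≤ β) (f : ℕ → ℝ) (h0 : 1 ≤ f 0)
    (P : ℕ → Prop) [DecidablePred P] :
    ∀ n, (∀ j < n, f j ≤ f (j + 1)) → (∀ j < n, P j → β * f j ≤ f (j + 1)) →
      β ^ ((Finset.range n).filter P).card ≤ f n := by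
  intro n
  induction n with
  | zero => intro _ _; simpa using h0
  | succ n ih =>
    intro hmono hstep
    have hfn := ih (fun j hj => hmono j (by omega)) (fun j hj => hstep j (by omega))
    have hβ0 : (0 : ℝ) < β := by linarith
    rw [Finset.range_add_one, Finset.filter_insert]
    by_cases hP : P n
    · rw [if_pos hP, Finset.card_insert_of_notMem (by simp)]
      rw [pow_succ]
      calc β ^ ((Finset.range n).filter P).card * β ≤ f n * β :=
            mul_le_mul_of_nonneg_right hfn hβ0.le
        _ = β * f n := mul_comm _ _
        _ ≤ f (n + 1) := hstep n (Nat.lt_succ_self n) hP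
    · rw [if_neg hP]
      exact hfn.trans (hmono n (Nat.lt_succ_self n))


/-- The lazy-updating trigger condition: episode `k` triggers a new epoch relative to the epoch
start `kj` if some state–action–step triple has its observed visitation counter reach
`(1 + 1/α)` times (the positive part of) its value at the epoch start. -/
def lazyTrigger {𝒮 𝒜 : Type*} (H : ℕ) (α : ℝ) (N' : ℕ → ℕ → 𝒮 → 𝒜 → ℕ)
    (kj k : ℕ) : Prop :=
  ∃ st : 𝒮, ∃ ac : 𝒜, ∃ h ∈ Finset.Icc 1 H,
    (1 + 1 / α) * max 1 ((N' kj h st ac : ℝ)) ≤ (N' k h st ac : ℝ)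

/-- Consider `K ≥ 1` episodes of horizon `H ≥ 1` over finite state/action sets of sizes `S`,
`A`, visited pairs `(s_h^k, a_h^k)`, delays `τ_k`, and observed counters
`N'_{kh}(s,a) = #{i : 1 ≤ i < k, (s_h^i, a_h^i) = (s,a), i + τ_i < k}`. Fix `α ≥ 1`. Lazy
updating starts with epoch start `k_1 = 1` and recursively lets `k_{j+1}` be the least episode
`k` with `k_j < k ≤ K` such that `N'_{kh}(s,a) ≥ (1 + 1/α)·max{1, N'_{k_j h}(s,a)}` for some
`(s,a,h)`, stopping when no such episode exists; `J` is the total number of epoch starts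
`k_1 < … < k_J` (encoded here as `e 0, …, e (J-1)`). Then
`J ≤ 1 + H·S·A·log(K/(S·A) + 1)/log(1 + 1/α)`. -/
theorem stmt_9 {𝒮 𝒜 : Type*} [Fintype 𝒮] [Fintype 𝒜] [Nonempty 𝒮] [Nonempty 𝒜]
    [DecidableEq 𝒮] [DecidableEq 𝒜]
    (S A K H : ℕ) (hS : Fintype.card 𝒮 = S) (hA : Fintype.card 𝒜 = A)
    (hK : 1 ≤ K) (hH : 1 ≤ H)
    (s : ℕ → ℕ → 𝒮) (a : ℕ → ℕ → 𝒜) (τ : ℕ → ℕ)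
    (α : ℝ) (hα : 1 ≤ α)
    (N' : ℕ → ℕ → 𝒮 → 𝒜 → ℕ)
    (hN' : ∀ k h st ac, N' k h st ac =
      ((Finset.Ico 1 k).filter (fun i => s i h = st ∧ a i h = ac ∧ i + τ i < k)).card)
    (J : ℕ) (hJ : 1 ≤ J) (e : ℕ → ℕ)
    (he0 : e 0 = 1)
    (hsucc : ∀ j, j + 1 < J →
      e j < e (j + 1) ∧ e (j + 1) ≤ K ∧ lazyTrigger H α N' (e j) (e (j + 1)) ∧
        ∀ k, e j < k → k < e (j + 1) → ¬ lazyTrigger H α N' (e j) k)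
    (hstop : ∀ k, e (J - 1) < k → k ≤ K → ¬ lazyTrigger H α N' (e (J - 1)) k) :
    (J : ℝ) ≤ 1 + H * S * A * Real.log ((K : ℝ) / (S * A) + 1) / Real.log (1 + 1 / α) := by
  classical
  have hS1 : 1 ≤ S := hS ▸ Fintype.card_pos
  have hA1 : 1 ≤ A := hA ▸ Fintype.card_pos
  have hα0 : (0 : ℝ) < α := by linarith
  set β : ℝ := 1 + 1 / α with hβdef
  have hβ : 1 < β := by
    have : 0 < 1 / α := by positivity
    simp only [hβdef]; linarith
  have hlogβ : 0 < Real.log β := Real.log_pos hβ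
  have hSApos : (0 : ℝ) < (S : ℝ) * (A : ℝ) := by
    have h1 : (1 : ℝ) ≤ (S : ℝ) := by exact_mod_cast hS1
    have h2 : (1 : ℝ) ≤ (A : ℝ) := by exact_mod_cast hA1
    nlinarith
  set c : ℝ := (K : ℝ) / ((S : ℝ) * (A : ℝ)) + 1 with hcdef
  have hc1 : (1 : ℝ) ≤ c := by
    have : (0 : ℝ) ≤ (K : ℝ) / ((S : ℝ) * (A : ℝ)) := by positivity
    simp only [hcdef]; linarith
  have hc0 : (0 : ℝ) < c := by linarith
  have hcSA : c * ((S : ℝ) * (A : ℝ)) = (K : ℝ) + (S : ℝ) * (A : ℝ) := by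
    rw [hcdef, add_mul, div_mul_cancel₀ _ (ne_of_gt hSApos), one_mul]
  set n := J - 1 with hn
  -- monotonicity of N' in k
  have hmonoN : ∀ (h st ac : _) {k k' : ℕ}, k ≤ k' → N' k h st ac ≤ N' k' h st ac := by
    intro h st ac k k' hkk'
    rw [hN', hN']
    apply Finset.card_le_card
    intro i hi
    simp only [Finset.mem_filter, Finset.mem_Ico] at hi ⊢
    exact ⟨⟨hi.1.1, lt_of_lt_of_le hi.1.2 hkk'⟩, hi.2.1, hi.2.2.1,
      lt_of_lt_of_le hi.2.2.2 hkk'⟩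
  have heK : e n ≤ K := by
    rcases Nat.eq_zero_or_pos n with h0 | h1
    · rw [h0, he0]; exact hK
    · have hh := (hsucc (n - 1) (by omega)).2.1
      have hrw : n - 1 + 1 = n := by omega
      rwa [hrw] at hh
  -- choose witnesses for the triggers
  have hWex : ∀ j : ℕ, ∃ t : 𝒮 × 𝒜 × ℕ, j < n →
      t.2.2 ∈ Finset.Icc 1 H ∧
        β * max 1 ((N' (e j) t.2.2 t.1 t.2.1 : ℝ)) ≤ (N' (e (j + 1)) t.2.2 t.1 t.2.1 : ℝ) := by
    intro j
    by_cases hj : j < n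
    · obtain ⟨st, ac, h, hh, hle⟩ := (hsucc j (by omega)).2.2.1
      exact ⟨(st, ac, h), fun _ => ⟨hh, hle⟩⟩
    · exact ⟨(Classical.arbitrary _, Classical.arbitrary _, 1), fun hcon => absurd hcon hj⟩
  choose W hWspec using hWex
  set U : Finset (𝒮 × 𝒜 × ℕ) := Finset.univ ×ˢ Finset.univ ×ˢ Finset.Icc 1 H with hU
  have hWmem : ∀ j ∈ Finset.range n, W j ∈ U := by
    intro j hj
    have := (hWspec j (Finset.mem_range.mp hj)).1
    simp [hU, Finset.mem_product, this]
  have hcard : n = ∑ t ∈ U, ((Finset.range n).filter (fun j => W j = t)).card := by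
    simpa using Finset.card_eq_sum_card_fiberwise hWmem
  -- per-triple exponential growth
  have hpow : ∀ t : 𝒮 × 𝒜 × ℕ,
      β ^ ((Finset.range n).filter (fun j => W j = t)).card
        ≤ max 1 ((N' (e n) t.2.2 t.1 t.2.1 : ℝ)) := by
    intro t
    refine aux_pow_le_of_steps β hβ.le
      (fun j => max 1 ((N' (e j) t.2.2 t.1 t.2.1 : ℝ))) (le_max_left _ _)
      (fun j => W j = t) n ?_ ?_
    · intro j hj
      have he : e j ≤ e (j + 1) := (hsucc j (by omega)).1.le
      have := hmonoN t.2.2 t.1 t.2.1 he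
      exact max_le_max le_rfl (by exact_mod_cast this)
    · intro j hj hPj
      have hsp := hWspec j hj
      rw [hPj] at hsp
      exact hsp.2.trans (le_max_right _ _)
  -- count bound turned into a log bound
  have hlogsum : (n : ℝ) * Real.log β
      ≤ ∑ t ∈ U, Real.log (max 1 ((N' K t.2.2 t.1 t.2.1 : ℝ))) := by
    have hn' : (n : ℝ) = ∑ t ∈ U, (((Finset.range n).filter (fun j => W j = t)).card : ℝ) := by
      exact_mod_cast congrArg (Nat.cast : ℕ → ℝ) hcard
    rw [hn', Finset.sum_mul]
    apply Finset.sum_le_sum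
    intro t ht
    have h1 := hpow t
    have h2 : max 1 ((N' (e n) t.2.2 t.1 t.2.1 : ℝ)) ≤ max 1 ((N' K t.2.2 t.1 t.2.1 : ℝ)) :=
      max_le_max le_rfl (by exact_mod_cast hmonoN t.2.2 t.1 t.2.1 heK)
    have hβ0 : (0 : ℝ) < β := by linarith
    calc (((Finset.range n).filter (fun j => W j = t)).card : ℝ) * Real.log β
        = Real.log (β ^ ((Finset.range n).filter (fun j => W j = t)).card) :=
          (Real.log_pow _ _).symm
      _ ≤ Real.log (max 1 ((N' K t.2.2 t.1 t.2.1 : ℝ))) := by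
          apply Real.log_le_log (pow_pos hβ0 _) (h1.trans h2)
  -- cardinality of U
  have hUcard : U.card = S * A * H := by
    simp [hU, Finset.card_univ, hS, hA, Nat.card_Icc, mul_assoc]
  -- sum of the counters over all triples
  have hnat : ∀ h : ℕ, ∑ st : 𝒮, ∑ ac : 𝒜, N' K h st ac ≤ K - 1 := by
    intro h
    set B := (Finset.Ico 1 K).filter (fun i => i + τ i < K) with hB
    have hfib := Finset.card_eq_sum_card_fiberwise
      (s := B) (t := (Finset.univ : Finset (𝒮 × 𝒜)))
      (f := fun i => (s i h, a i h)) (fun i _ => Finset.mem_univ _)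
    have heq : ∑ st : 𝒮, ∑ ac : 𝒜, N' K h st ac = B.card := by
      rw [hfib, Fintype.sum_prod_type]
      apply Finset.sum_congr rfl
      intro st _
      apply Finset.sum_congr rfl
      intro ac _
      rw [hN', hB, Finset.filter_filter]
      exact congrArg Finset.card (Finset.filter_congr (fun i _ => by
        simp only [Prod.mk.injEq]; tauto))
    rw [heq]
    calc B.card ≤ (Finset.Ico 1 K).card := Finset.card_filter_le _ _
      _ = K - 1 := by rw [Nat.card_Ico]
  -- real-valued sum bound per step h
  have hsumh : ∀ h : ℕ, ∑ st : 𝒮, ∑ ac : 𝒜, max 1 ((N' K h st ac : ℝ)) ≤ c * ((S:ℝ) * (A:ℝ)) := by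
    intro h
    have step1 : ∑ st : 𝒮, ∑ ac : 𝒜, max 1 ((N' K h st ac : ℝ))
        ≤ ∑ st : 𝒮, ∑ ac : 𝒜, ((N' K h st ac : ℝ) + 1) := by
      apply Finset.sum_le_sum; intro st _
      apply Finset.sum_le_sum; intro ac _
      apply max_le
      · have : (0:ℝ) ≤ (N' K h st ac : ℝ) := Nat.cast_nonneg _
        linarith
      · linarith
    have step2 : ∑ st : 𝒮, ∑ ac : 𝒜, ((N' K h st ac : ℝ) + 1)
        = (∑ st : 𝒮, ∑ ac : 𝒜, (N' K h st ac : ℝ)) + (S:ℝ) * (A:ℝ) := by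
      simp only [Finset.sum_add_distrib, Finset.sum_const, Finset.card_univ, hS, hA,
        nsmul_eq_mul, mul_one]
      try push_cast
      try ring
    have step3 : (∑ st : 𝒮, ∑ ac : 𝒜, (N' K h st ac : ℝ)) ≤ (K : ℝ) := by
      have h1 := hnat h
      have h2 : ((∑ st : 𝒮, ∑ ac : 𝒜, N' K h st ac : ℕ) : ℝ)
          = ∑ st : 𝒮, ∑ ac : 𝒜, (N' K h st ac : ℝ) := by push_cast; rfl
      have h3 : ((∑ st : 𝒮, ∑ ac : 𝒜, N' K h st ac : ℕ) : ℝ) ≤ ((K - 1 : ℕ) : ℝ) := by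
        exact_mod_cast h1
      have h4 : ((K - 1 : ℕ) : ℝ) ≤ (K : ℝ) := by
        have : K - 1 ≤ K := Nat.sub_le _ _
        exact_mod_cast this
      linarith [h2 ▸ h3]
    rw [hcSA]
    linarith
  -- reorganize the sum over U
  have hsumU : ∑ t ∈ U, max 1 ((N' K t.2.2 t.1 t.2.1 : ℝ))
      ≤ (H : ℝ) * (c * ((S:ℝ) * (A:ℝ))) := by
    have hre : ∑ t ∈ U, max 1 ((N' K t.2.2 t.1 t.2.1 : ℝ))
        = ∑ h ∈ Finset.Icc 1 H, ∑ st : 𝒮, ∑ ac : 𝒜, max 1 ((N' K h st ac : ℝ)) := by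
      rw [hU, Finset.sum_product]
      simp only [Finset.sum_product]
      calc ∑ st : 𝒮, ∑ ac : 𝒜, ∑ h ∈ Finset.Icc 1 H, max 1 ((N' K h st ac : ℝ))
          = ∑ st : 𝒮, ∑ h ∈ Finset.Icc 1 H, ∑ ac : 𝒜, max 1 ((N' K h st ac : ℝ)) :=
            Finset.sum_congr rfl (fun st _ => Finset.sum_comm)
        _ = ∑ h ∈ Finset.Icc 1 H, ∑ st : 𝒮, ∑ ac : 𝒜, max 1 ((N' K h st ac : ℝ)) :=
            Finset.sum_comm
    rw [hre]
    calc ∑ h ∈ Finset.Icc 1 H, ∑ st : 𝒮, ∑ ac : 𝒜, max 1 ((N' K h st ac : ℝ))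
        ≤ ∑ h ∈ Finset.Icc 1 H, c * ((S:ℝ) * (A:ℝ)) :=
          Finset.sum_le_sum (fun h _ => hsumh h)
      _ = (H : ℝ) * (c * ((S:ℝ) * (A:ℝ))) := by
          rw [Finset.sum_const, Nat.card_Icc]
          simp [nsmul_eq_mul]
  -- tangent-line bound on the logarithms
  have hsumlog : ∑ t ∈ U, Real.log (max 1 ((N' K t.2.2 t.1 t.2.1 : ℝ)))
      ≤ (H : ℝ) * (S:ℝ) * (A:ℝ) * Real.log c := by
    have htan : ∀ t ∈ U, Real.log (max 1 ((N' K t.2.2 t.1 t.2.1 : ℝ)))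
        ≤ Real.log c + max 1 ((N' K t.2.2 t.1 t.2.1 : ℝ)) / c - 1 := by
      intro t _
      have hv1 : (1:ℝ) ≤ max 1 ((N' K t.2.2 t.1 t.2.1 : ℝ)) := le_max_left _ _
      have hlog := Real.log_le_sub_one_of_pos
        (x := max 1 ((N' K t.2.2 t.1 t.2.1 : ℝ)) / c) (by positivity)
      rw [Real.log_div (by linarith) (ne_of_gt hc0)] at hlog
      linarith
    calc ∑ t ∈ U, Real.log (max 1 ((N' K t.2.2 t.1 t.2.1 : ℝ)))
        ≤ ∑ t ∈ U, (Real.log c + max 1 ((N' K t.2.2 t.1 t.2.1 : ℝ)) / c - 1) :=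
          Finset.sum_le_sum htan
      _ = (U.card : ℝ) * (Real.log c - 1)
            + (∑ t ∈ U, max 1 ((N' K t.2.2 t.1 t.2.1 : ℝ))) / c := by
          rw [Finset.sum_sub_distrib, Finset.sum_add_distrib, Finset.sum_const,
            Finset.sum_const, ← Finset.sum_div]
          ring
      _ ≤ (U.card : ℝ) * (Real.log c - 1) + (H : ℝ) * ((S:ℝ) * (A:ℝ)) := by
          have h1 : (∑ t ∈ U, max 1 ((N' K t.2.2 t.1 t.2.1 : ℝ))) / c
              ≤ ((H : ℝ) * (c * ((S:ℝ) * (A:ℝ)))) / c :=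
            by gcongr
          have h2 : ((H : ℝ) * (c * ((S:ℝ) * (A:ℝ)))) / c = (H : ℝ) * ((S:ℝ) * (A:ℝ)) := by
            field_simp
          rw [h2] at h1
          linarith
      _ = (H : ℝ) * (S:ℝ) * (A:ℝ) * Real.log c := by
          rw [hUcard]
          push_cast
          ring
  have hkey : (n : ℝ) * Real.log β ≤ (H : ℝ) * (S:ℝ) * (A:ℝ) * Real.log c :=
    hlogsum.trans hsumlog
  have hfin : (n : ℝ) ≤ (H : ℝ) * (S:ℝ) * (A:ℝ) * Real.log c / Real.log β :=
    (le_div_iff₀ hlogβ).mpr hkey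
  have hJn : (J : ℝ) = (n : ℝ) + 1 := by
    have : J = n + 1 := by omega
    rw [this]; push_cast; ring
  rw [hJn]
  linarith
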